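/- For every h > 0, the function T_h attains its minimum over the interval [0, (s 0)²/2] at a unique point α*, and this minimizer satisfies α* > 0. -/

import Mathlib

open Set Filter

/-- derivative of `A/(x+p)^2` -/
lemma hasDerivAt_A2 (A p x : ℝ) (hx : x + p ≠ 0) :
    HasDerivAt (fun α => A / (α + p) ^ 2) (-2 * A / (x + p) ^ 3) x := by
  have h1 : HasDerivAt (fun α : ℝ => (α + p) ^ 2) (2 * (x + p)) x := by
    simpa using (((hasDerivAt_id x).add_const p).fun_pow 2)
  have := (hasDerivAt_const x A).fun_div h1 (pow_ne_zero 2 hx)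
  refine this.congr_deriv ?_
  field_simp
  ring

/-- derivative of `A/(x+p)^3` -/
lemma hasDerivAt_A3 (A p x : ℝ) (hx : x + p ≠ 0) :
    HasDerivAt (fun α => A / (α + p) ^ 3) (-3 * A / (x + p) ^ 4) x := by
  have h1 : HasDerivAt (fun α : ℝ => (α + p) ^ 3) (3 * (x + p) ^ 2) x := by
    simpa using (((hasDerivAt_id x).add_const p).fun_pow 3)
  have := (hasDerivAt_const x A).fun_div h1 (pow_ne_zero 3 hx)
  refine this.congr_deriv ?_
  field_simp
  ring

/-- derivative of `x²/(x+c)²` -/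
lemma hasDerivAt_f1 (c x : ℝ) (hx : x + c ≠ 0) :
    HasDerivAt (fun α => α ^ 2 / (α + c) ^ 2) (2 * x * c / (x + c) ^ 3) x := by
  have h1 : HasDerivAt (fun α : ℝ => (α + c) ^ 2) (2 * (x + c)) x := by
    simpa using (((hasDerivAt_id x).add_const c).fun_pow 2)
  have h2 : HasDerivAt (fun α : ℝ => α ^ 2) (2 * x) x := by simpa using hasDerivAt_pow 2 x
  have := h2.fun_div h1 (pow_ne_zero 2 hx)
  refine this.congr_deriv ?_
  field_simp
  ring

lemma hasDerivAt_g1 (c x : ℝ) (hx : x + c ≠ 0) :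
    HasDerivAt (fun α => 2 * α * c / (α + c) ^ 3) (2 * c * (c - 2 * x) / (x + c) ^ 4) x := by
  have h1 : HasDerivAt (fun α : ℝ => (α + c) ^ 3) (3 * (x + c) ^ 2) x := by
    simpa using (((hasDerivAt_id x).add_const c).fun_pow 3)
  have h2 : HasDerivAt (fun α : ℝ => 2 * α * c) (2 * c) x := by
    simpa [mul_comm, mul_assoc, mul_left_comm] using ((hasDerivAt_id x).const_mul 2).mul_const c
  have := h2.fun_div h1 (pow_ne_zero 3 hx)
  refine this.congr_deriv ?_
  field_simp
  ring

/-- strict convexity of a single term `A/(α+p)²` on `Icc 0 m` for `A, p > 0`. -/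
lemma strictConvexOn_term (A p m : ℝ) (hA : 0 < A) (hp : 0 < p) :
    StrictConvexOn ℝ (Icc 0 m) (fun α => A / (α + p) ^ 2) := by
  apply strictConvexOn_of_deriv2_pos (convex_Icc 0 m)
  · apply ContinuousOn.div continuousOn_const (by fun_prop)
    intro x hx
    exact pow_ne_zero 2 (by nlinarith [hx.1])
  · intro x hx
    rw [interior_Icc] at hx
    have hxp : x + p ≠ 0 := by nlinarith [hx.1]
    have heq : deriv (fun α => A / (α + p) ^ 2) =ᶠ[nhds x]
        (fun y => -2 * A / (y + p) ^ 3) := by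
      filter_upwards [isOpen_Ioi.mem_nhds (show x ∈ Ioi (-p) by simp; linarith [hx.1])] with y hy
      exact (hasDerivAt_A2 A p y (by simp [Ioi] at hy; linarith)).deriv
    simp only [Function.iterate_succ, Function.iterate_zero, Function.comp_apply, Function.id_def]
    rw [heq.deriv_eq, (hasDerivAt_A3 (-2 * A) p x hxp).deriv]
    have : (0:ℝ) < x + p := by linarith [hx.1]
    have h6 : -3 * (-2 * A) = 6 * A := by ring
    rw [h6]
    positivity

/-- strict convexity of `α²/(α+c)²` on `Icc 0 (c/2)` for `c > 0`. -/
lemma strictConvexOn_f1 (c : ℝ) (hc : 0 < c) :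
    StrictConvexOn ℝ (Icc 0 (c / 2)) (fun α => α ^ 2 / (α + c) ^ 2) := by
  apply strictConvexOn_of_deriv2_pos (convex_Icc 0 (c / 2))
  · apply ContinuousOn.div (by fun_prop) (by fun_prop)
    intro x hx
    exact pow_ne_zero 2 (by nlinarith [hx.1])
  · intro x hx
    rw [interior_Icc] at hx
    have hxc : x + c ≠ 0 := by nlinarith [hx.1]
    have heq : deriv (fun α => α ^ 2 / (α + c) ^ 2) =ᶠ[nhds x]
        (fun y => 2 * y * c / (y + c) ^ 3) := by
      filter_upwards [isOpen_Ioi.mem_nhds (show x ∈ Ioi (-c) by simp; linarith [hx.1])] with y hy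
      exact (hasDerivAt_f1 c y (by simp [Ioi] at hy; linarith)).deriv
    simp only [Function.iterate_succ, Function.iterate_zero, Function.comp_apply, Function.id_def]
    rw [heq.deriv_eq, (hasDerivAt_g1 c x hxc).deriv]
    have h1 : (0:ℝ) < x + c := by linarith [hx.1]
    have h2 : (0:ℝ) < c - 2 * x := by linarith [hx.2]
    positivity

lemma convexOn_sum' {ι : Type*} {D : Set ℝ} (hD : Convex ℝ D) (t : Finset ι) (f : ι → ℝ → ℝ)
    (hf : ∀ i ∈ t, ConvexOn ℝ D (f i)) :
    ConvexOn ℝ D (fun x => ∑ i ∈ t, f i x) := by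
  classical
  induction t using Finset.induction_on with
  | empty => simpa using convexOn_const 0 hD
  | insert a t ha ih =>
    simp only [Finset.sum_insert ha]
    exact (hf a (Finset.mem_insert_self a t)).add
      (ih fun i hi => hf i (Finset.mem_insert_of_mem hi))

/-- The PRO function `T_h(α) = f₁(α) + h·f₂(α)` for Tikhonov regularization. -/
noncomputable def proT (r : ℕ) (hr : 0 < r) (s : Fin r → ℝ) (h : ℝ) (α : ℝ) : ℝ :=
  α ^ 2 / (α + (s ⟨0, hr⟩) ^ 2) ^ 2 + h * ∑ i, (s i) ^ 4 / (α + (s i) ^ 2) ^ 2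

/-- For every `h > 0`, `T_h` attains its minimum over `[0, (s 0)²/2]` at a
unique point `α*`, which moreover satisfies `α* > 0`. -/
theorem proT_exists_unique_minimizer (r : ℕ) (hr : 0 < r) (s : Fin r → ℝ)
    (hpos : ∀ i, 0 < s i) (hmax : ∀ i, s i ≤ s ⟨0, hr⟩) (h : ℝ) (hh : 0 < h) :
    ∃ a ∈ Set.Icc (0 : ℝ) ((s ⟨0, hr⟩) ^ 2 / 2),
      IsMinOn (proT r hr s h) (Set.Icc 0 ((s ⟨0, hr⟩) ^ 2 / 2)) a ∧ 0 < a ∧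
      ∀ b ∈ Set.Icc (0 : ℝ) ((s ⟨0, hr⟩) ^ 2 / 2),
        IsMinOn (proT r hr s h) (Set.Icc 0 ((s ⟨0, hr⟩) ^ 2 / 2)) b → b = a := by
  have : Nonempty (Fin r) := ⟨⟨0, hr⟩⟩
  set c : ℝ := (s ⟨0, hr⟩) ^ 2 with hc_def
  have hc : 0 < c := pow_pos (hpos ⟨0, hr⟩) 2
  set D : Set ℝ := Icc (0:ℝ) (c / 2) with hD_def
  -- strict convexity
  have hstrict : StrictConvexOn ℝ D (proT r hr s h) := by
    have h1 := strictConvexOn_f1 c hc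
    have h2 : ConvexOn ℝ D (fun α => ∑ i, (s i) ^ 4 / (α + (s i) ^ 2) ^ 2) :=
      convexOn_sum' (convex_Icc 0 (c / 2)) Finset.univ
        (fun i α => (s i) ^ 4 / (α + (s i) ^ 2) ^ 2)
        (fun i _ => (strictConvexOn_term _ _ _ (pow_pos (hpos i) 4)
          (pow_pos (hpos i) 2)).convexOn)
    have h3 := h2.smul hh.le
    have := h1.add_convexOn h3
    have heq : proT r hr s h
        = (fun α => α ^ 2 / (α + c) ^ 2) + fun α => h • ∑ i, (s i) ^ 4 / (α + (s i) ^ 2) ^ 2 := by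
      funext α
      simp [proT, smul_eq_mul, c]
    rw [heq]
    exact this
  -- continuity
  have hcont : ContinuousOn (proT r hr s h) D := by
    apply ContinuousOn.add
    · apply ContinuousOn.div (by fun_prop) (by fun_prop)
      intro x hx
      exact pow_ne_zero 2 (by nlinarith [hx.1])
    · apply ContinuousOn.const_smul ?_ h
      apply continuousOn_finset_sum
      intro i _
      apply ContinuousOn.div continuousOn_const (by fun_prop)
      intro x hx
      have := hpos i
      exact pow_ne_zero 2 (by nlinarith [hx.1])
  -- existence of minimizer
  obtain ⟨a, haD, hamin⟩ := isCompact_Icc.exists_isMinOn (nonempty_Icc.2 (by positivity)) hcont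
  -- derivative at 0 is negative
  have hderiv : HasDerivAt (proT r hr s h)
      (2 * 0 * c / (0 + c) ^ 3 + h * ∑ i, -2 * (s i) ^ 4 / (0 + (s i) ^ 2) ^ 3) 0 := by
    have h1 := hasDerivAt_f1 c 0 (by positivity)
    have h2 : HasDerivAt (fun α => ∑ i, (s i) ^ 4 / (α + (s i) ^ 2) ^ 2)
        (∑ i, -2 * (s i) ^ 4 / (0 + (s i) ^ 2) ^ 3) 0 :=
      HasDerivAt.fun_sum fun i _ => hasDerivAt_A2 _ _ 0 (by have := hpos i; positivity)
    exact h1.add (h2.const_mul h)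
  have hDneg : 2 * 0 * c / (0 + c) ^ 3 + h * ∑ i, -2 * (s i) ^ 4 / (0 + (s i) ^ 2) ^ 3 < 0 := by
    have hsum : ∑ i, -2 * (s i) ^ 4 / (0 + (s i) ^ 2) ^ 3 < 0 := by
      apply Finset.sum_neg (fun i _ => ?_) Finset.univ_nonempty
      have := hpos i
      have : (0:ℝ) < 2 * (s i) ^ 4 / (0 + (s i) ^ 2) ^ 3 := by positivity
      have heq : -2 * (s i) ^ 4 / (0 + (s i) ^ 2) ^ 3
          = -(2 * (s i) ^ 4 / (0 + (s i) ^ 2) ^ 3) := by ring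
      rw [heq]; linarith
    have : h * ∑ i, -2 * (s i) ^ 4 / (0 + (s i) ^ 2) ^ 3 < 0 := mul_neg_of_pos_of_neg hh hsum
    simp only [mul_zero, zero_mul, zero_div, zero_add] at *
    linarith
  -- find a point y ∈ (0, c/2) with smaller value than at 0
  have hslope : Tendsto (slope (proT r hr s h) 0) (nhdsWithin 0 (Ioi 0))
      (nhds (2 * 0 * c / (0 + c) ^ 3 + h * ∑ i, -2 * (s i) ^ 4 / (0 + (s i) ^ 2) ^ 3)) :=
    (hasDerivAt_iff_tendsto_slope.mp hderiv).mono_left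
      (nhdsWithin_mono 0 (fun y hy => ne_of_gt hy))
  have hev1 : ∀ᶠ y in nhdsWithin (0:ℝ) (Ioi 0), slope (proT r hr s h) 0 y < 0 :=
    hslope.eventually_lt_const hDneg
  have hev2 : ∀ᶠ y in nhdsWithin (0:ℝ) (Ioi 0), y < c / 2 :=
    (eventually_lt_nhds (by positivity : (0:ℝ) < c / 2)).filter_mono nhdsWithin_le_nhds
  have hev3 : ∀ᶠ y in nhdsWithin (0:ℝ) (Ioi 0), (0:ℝ) < y :=
    eventually_mem_nhdsWithin
  obtain ⟨y, hy1, hy2, hy3⟩ := (hev1.and (hev2.and hev3)).exists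
  have hylt : proT r hr s h y < proT r hr s h 0 := by
    rw [slope_def_field] at hy1
    by_contra hcontra
    push_neg at hcontra
    have : (0:ℝ) ≤ (proT r hr s h y - proT r hr s h 0) / (y - 0) :=
      div_nonneg (by linarith) (by linarith)
    linarith
  have hyD : y ∈ D := ⟨hy3.le, hy2.le⟩
  have h0D : (0:ℝ) ∈ D := ⟨le_refl 0, by positivity⟩
  have hane : a ≠ 0 := by
    intro hcontra
    have h1 : proT r hr s h a ≤ proT r hr s h y := hamin hyD
    rw [hcontra] at h1
    linarith
  refine ⟨a, haD, hamin, lt_of_le_of_ne haD.1 (Ne.symm hane), ?_⟩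
  intro b hbD hbmin
  exact hstrict.eq_of_isMinOn hbmin hamin hbD haD
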